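/- Let (Ω,F,ℙ) be a probability space, H a real Hilbert space, (φ_k)_{k≥1} an orthonormal family in H, (λ_k)_{k≥1} a summable sequence of nonnegative reals, and (Y_k)_{k≥1} random variables in L²(Ω) with 𝔼[Y_k] = 0 and 𝔼[Y_j Y_k] = δ_{jk}. Let v = Σ_{k≥1} √λ_k Y_k φ_k in L²(Ω;H), fix M ≥ 1, let V_0 = span{φ_1,…,φ_M}, and let P be the orthogonal projection of H onto V_0^⊥. Let w ∈ L²(Ω;H) satisfy w(ω) ∈ V_0^⊥ almost surely, set u = v + w and t_M := Σ_{k≥M+1} λ_k. Then ( ‖w‖_{L²(Ω;H)} − √t_M )² ≤ ‖Pu‖²_{L²(Ω;H)} ≤ ( ‖w‖_{L²(Ω;H)} + √t_M )². -/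

import Mathlib

open MeasureTheory
open scoped RealInnerProductSpace

/-- Two-sided detection bound of Theorem 3.3: with `V₀ = span{φ_0,…,φ_{M-1}}`, `P` the
orthogonal projection onto `V₀ᗮ`, `w(ω) ∈ V₀ᗮ` a.s., `u = v + w` and
`t_M = Σ_{k ≥ M} λ_k`, one has
`(‖w‖_{L²(Ω;H)} - √t_M)² ≤ ‖Pu‖²_{L²(Ω;H)} ≤ (‖w‖_{L²(Ω;H)} + √t_M)²`. -/
theorem stmt9 {Ω : Type*} [MeasurableSpace Ω] (μ : Measure Ω) [IsProbabilityMeasure μ]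
    {H : Type*} [NormedAddCommGroup H] [InnerProductSpace ℝ H] [CompleteSpace H]
    (φ : ℕ → H) (hφ : Orthonormal ℝ φ)
    (lam : ℕ → ℝ) (hlam : ∀ k, 0 ≤ lam k) (hsum : Summable lam)
    (Y : ℕ → Ω → ℝ) (hY : ∀ k, MemLp (Y k) 2 μ)
    (hYmean : ∀ k, ∫ ω, Y k ω ∂μ = 0)
    (hYcov : ∀ j k, ∫ ω, Y j ω * Y k ω ∂μ = if j = k then (1 : ℝ) else 0)
    (v : Ω → H) (hv : MemLp v 2 μ)
    (hconv : Filter.Tendsto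
      (fun n => ∫ ω, ‖v ω - ∑ k ∈ Finset.range n, (Real.sqrt (lam k) * Y k ω) • φ k‖ ^ 2 ∂μ)
      Filter.atTop (nhds 0))
    (M : ℕ) (hM : 1 ≤ M)
    (P : H → H)
    (hP1 : ∀ x, P x ∈ (Submodule.span ℝ (φ '' Set.Iio M))ᗮ)
    (hP2 : ∀ x, x - P x ∈ Submodule.span ℝ (φ '' Set.Iio M))
    (w : Ω → H) (hw : MemLp w 2 μ)
    (hworth : ∀ᵐ ω ∂μ, w ω ∈ (Submodule.span ℝ (φ '' Set.Iio M))ᗮ)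
    (u : Ω → H) (hu : ∀ ω, u ω = v ω + w ω) :
    (Real.sqrt (∫ ω, ‖w ω‖ ^ 2 ∂μ) - Real.sqrt (∑' k : ℕ, lam (M + k))) ^ 2
      ≤ ∫ ω, ‖P (u ω)‖ ^ 2 ∂μ ∧
    ∫ ω, ‖P (u ω)‖ ^ 2 ∂μ
      ≤ (Real.sqrt (∫ ω, ‖w ω‖ ^ 2 ∂μ) + Real.sqrt (∑' k : ℕ, lam (M + k))) ^ 2 := by
  classical
  haveI : Fact ((1 : ENNReal) ≤ 2) := ⟨one_le_two⟩
  set K : Submodule ℝ H := Submodule.span ℝ (φ '' Set.Iio M) with hKdef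
  haveI : FiniteDimensional ℝ K :=
    FiniteDimensional.span_of_finite ℝ ((Set.finite_Iio M).image φ)
  haveI : CompleteSpace K := FiniteDimensional.complete ℝ K
  set T : H →L[ℝ] H := Kᗮ.subtypeL.comp (Submodule.orthogonalProjectionOnto Kᗮ) with hTdef
  have hT_apply : ∀ x : H, T x = (Submodule.orthogonalProjectionOnto Kᗮ x : H) := fun x => rfl
  have hPT : ∀ x, P x = T x := by
    intro x
    exact (Submodule.eq_starProjection_of_mem_orthogonal' (hP1 x)
      (K.le_orthogonal_orthogonal (hP2 x)) (by abel)).symm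
  -- projections of the basis vectors
  have hTφ0 : ∀ k, k < M → T (φ k) = 0 := by
    intro k hk
    have hmem : φ k ∈ Kᗮᗮ :=
      K.le_orthogonal_orthogonal (Submodule.subset_span ⟨k, Set.mem_Iio.2 hk, rfl⟩)
    rw [hT_apply, Submodule.orthogonalProjectionOnto_apply_of_mem_orthogonal hmem,
      Submodule.coe_zero]
  have hφmem : ∀ k, M ≤ k → φ k ∈ Kᗮ := by
    intro k hk
    rw [Submodule.mem_orthogonal]
    intro x hx
    have hker : K ≤ LinearMap.ker ((innerSL ℝ (φ k) : H →L[ℝ] ℝ) : H →ₗ[ℝ] ℝ) := by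
      rw [hKdef, Submodule.span_le]
      rintro _ ⟨j, hj, rfl⟩
      simp only [SetLike.mem_coe, LinearMap.mem_ker, ContinuousLinearMap.coe_coe, innerSL_apply_apply]
      exact hφ.2 (fun h => absurd (h ▸ hk) (not_le.2 (Set.mem_Iio.1 hj)))
    have := hker hx
    simp only [LinearMap.mem_ker, ContinuousLinearMap.coe_coe, innerSL_apply_apply] at this
    rw [real_inner_comm]; exact this
  have hTφ1 : ∀ k, M ≤ k → T (φ k) = φ k := by
    intro k hk
    rw [hT_apply]
    exact Submodule.starProjection_eq_self_iff.mpr (hφmem k hk)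
  -- Lp setup
  let TL : Lp H 2 μ →L[ℝ] Lp H 2 μ := T.compLpL 2 μ
  have hnormsq : ∀ f : Lp H 2 μ, ‖f‖ ^ 2 = ∫ a, ‖f a‖ ^ 2 ∂μ := by
    intro f
    have h1 : ⟪f, f⟫ = ∫ a, ⟪f a, f a⟫ ∂μ := L2.inner_def f f
    rw [real_inner_self_eq_norm_sq] at h1
    rw [h1]
    simp_rw [real_inner_self_eq_norm_sq]
  let s : ℕ → Ω → H := fun n ω => ∑ k ∈ Finset.range n, (Real.sqrt (lam k) * Y k ω) • φ k
  have hs : ∀ n, MemLp (s n) 2 μ := by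
    intro n
    have : ∀ k ∈ Finset.range n, MemLp (fun ω => (Real.sqrt (lam k) * Y k ω) • φ k) 2 μ :=
      fun k _ => MemLp.smul (p := 2) (q := ⊤) (memLp_const (φ k)) (((hY k).const_mul (Real.sqrt (lam k))))
    exact memLp_finset_sum (Finset.range n) this
  let V : Lp H 2 μ := hv.toLp v
  let W : Lp H 2 μ := hw.toLp w
  let Vn : ℕ → Lp H 2 μ := fun n => (hs n).toLp (s n)
  -- convergence Vn → V
  have hdiff : ∀ n, ‖V - Vn n‖ ^ 2 = ∫ ω, ‖v ω - s n ω‖ ^ 2 ∂μ := by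
    intro n
    rw [hnormsq]
    refine integral_congr_ae ?_
    filter_upwards [Lp.coeFn_sub V (Vn n), hv.coeFn_toLp, (hs n).coeFn_toLp] with ω h1 h2 h3
    rw [h1, Pi.sub_apply, h2, h3]
  have hsq_tendsto : Filter.Tendsto (fun n => ‖V - Vn n‖ ^ 2) Filter.atTop (nhds 0) := by
    have : Filter.Tendsto (fun n => ∫ ω, ‖v ω - s n ω‖ ^ 2 ∂μ) Filter.atTop (nhds 0) := hconv
    exact Filter.Tendsto.congr (fun n => (hdiff n).symm) this
  have hVn_tendsto : Filter.Tendsto Vn Filter.atTop (nhds V) := by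
    rw [tendsto_iff_norm_sub_tendsto_zero]
    have h2 := (Real.continuous_sqrt.tendsto 0).comp hsq_tendsto
    simp only [Function.comp_def, Real.sqrt_zero] at h2
    refine Filter.Tendsto.congr (fun n => ?_) h2
    rw [Real.sqrt_sq (norm_nonneg _), norm_sub_rev]
  -- value of T on the partial sums
  have hTVn_ae : ∀ n, (TL (Vn n) : Ω → H)
      =ᵐ[μ] fun ω => ∑ k ∈ Finset.Ico M n, (Real.sqrt (lam k) * Y k ω) • φ k := by
    intro n
    filter_upwards [T.coeFn_compLpL (Vn n), (hs n).coeFn_toLp] with ω h1 h2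
    rw [h1, h2]
    have : T (s n ω) = ∑ k ∈ Finset.range n, (Real.sqrt (lam k) * Y k ω) • T (φ k) := by
      simp [s, map_sum, _root_.map_smul]
    rw [this]
    rw [← Finset.sum_subset (fun x hx => Finset.mem_range.2 (Finset.mem_Ico.1 hx).2)
      (fun x hx hx' => ?_)]
    · refine Finset.sum_congr rfl fun k hk => ?_
      rw [hTφ1 k (Finset.mem_Ico.1 hk).1]
    · have hxM : x < M := by
        by_contra h
        exact hx' (Finset.mem_Ico.2 ⟨not_lt.1 h, Finset.mem_range.1 hx⟩)
      rw [hTφ0 x hxM, smul_zero]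
  have hTVn_norm : ∀ n, ‖TL (Vn n)‖ ^ 2 = ∑ k ∈ Finset.Ico M n, lam k := by
    intro n
    rw [hnormsq]
    rw [integral_congr_ae ((hTVn_ae n).mono fun ω h => by rw [h])]
    have hpt : ∀ ω : Ω, ‖∑ k ∈ Finset.Ico M n, (Real.sqrt (lam k) * Y k ω) • φ k‖ ^ 2
        = ∑ k ∈ Finset.Ico M n, lam k * (Y k ω * Y k ω) := by
      intro ω
      have h := hφ.inner_sum (fun k => Real.sqrt (lam k) * Y k ω)
        (fun k => Real.sqrt (lam k) * Y k ω) (Finset.Ico M n)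
      rw [real_inner_self_eq_norm_sq] at h
      rw [h]
      refine Finset.sum_congr rfl fun k _ => ?_
      simp only [starRingEnd_apply, star_trivial]
      rw [mul_mul_mul_comm, Real.mul_self_sqrt (hlam k)]
    simp_rw [hpt]
    rw [integral_finset_sum]
    · refine Finset.sum_congr rfl fun k _ => ?_
      rw [integral_const_mul, hYcov k k, if_pos rfl, mul_one]
    · intro k _
      have : Integrable (fun ω => Y k ω ^ 2) μ := (hY k).integrable_sq
      have h2 : Integrable (fun ω => Y k ω * Y k ω) μ := by
        refine this.congr (Filter.Eventually.of_forall fun ω => ?_)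
        ring
      exact h2.const_mul (lam k)
  -- the tail sum
  set t : ℝ := ∑' k : ℕ, lam (M + k) with htdef
  have ht0 : 0 ≤ t := tsum_nonneg fun k => hlam _
  have hsum' : Summable (fun k => lam (M + k)) := by
    have := (_root_.summable_nat_add_iff (f := lam) M).2 hsum
    refine this.congr fun k => ?_
    rw [Nat.add_comm]
  have ht : Filter.Tendsto (fun n => ∑ k ∈ Finset.Ico M n, lam k) Filter.atTop (nhds t) := by
    have h1 : Filter.Tendsto (fun n => ∑ i ∈ Finset.range n, lam (M + i))
        Filter.atTop (nhds t) := hsum'.hasSum.tendsto_sum_nat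
    have h2 : Filter.Tendsto (fun n : ℕ => n - M) Filter.atTop Filter.atTop :=
      Filter.tendsto_sub_atTop_nat M
    have h3 := h1.comp h2
    refine Filter.Tendsto.congr (fun n => ?_) h3
    rw [Function.comp_apply, ← Finset.sum_Ico_eq_sum_range]
  -- ‖TL V‖² = t
  have hTV_norm : ‖TL V‖ ^ 2 = t := by
    have h4 : Filter.Tendsto (fun n => ‖TL (Vn n)‖ ^ 2) Filter.atTop (nhds (‖TL V‖ ^ 2)) :=
      (((TL.continuous.tendsto V).comp hVn_tendsto).norm.pow 2)
    have h5 : Filter.Tendsto (fun n => ∑ k ∈ Finset.Ico M n, lam k)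
        Filter.atTop (nhds (‖TL V‖ ^ 2)) :=
      Filter.Tendsto.congr (fun n => hTVn_norm n) h4
    exact tendsto_nhds_unique h5 ht
  -- assemble
  have hvw : MemLp (fun ω => v ω + w ω) 2 μ := hv.add hw
  let U : Lp H 2 μ := hvw.toLp _
  have hU : U = V + W := by
    apply Lp.ext
    filter_upwards [hvw.coeFn_toLp, Lp.coeFn_add V W, hv.coeFn_toLp, hw.coeFn_toLp]
      with ω h1 h2 h3 h4
    rw [h1, h2, Pi.add_apply, h3, h4]
  have hTW : TL W = W := by
    apply Lp.ext
    filter_upwards [T.coeFn_compLpL W, hw.coeFn_toLp, hworth] with ω h1 h2 h3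
    rw [h1, h2, hT_apply]
    exact Submodule.starProjection_eq_self_iff.mpr h3
  have hTU : TL U = TL V + W := by rw [hU, map_add, hTW]
  have hgoal : ∫ ω, ‖P (u ω)‖ ^ 2 ∂μ = ‖TL U‖ ^ 2 := by
    rw [hnormsq]
    refine integral_congr_ae ?_
    filter_upwards [T.coeFn_compLpL U, hvw.coeFn_toLp] with ω h1 h2
    rw [h1, h2, hPT, hu ω]
  have hB : ∫ ω, ‖w ω‖ ^ 2 ∂μ = ‖W‖ ^ 2 := by
    rw [hnormsq]
    refine integral_congr_ae ?_
    filter_upwards [hw.coeFn_toLp] with ω h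
    rw [h]
  have hWs : Real.sqrt (∫ ω, ‖w ω‖ ^ 2 ∂μ) = ‖W‖ := by
    rw [hB, Real.sqrt_sq (norm_nonneg _)]
  have htv : ‖TL V‖ = Real.sqrt t := by
    rw [← hTV_norm, Real.sqrt_sq (norm_nonneg _)]
  have hA1 : ‖TL U‖ ≤ Real.sqrt t + ‖W‖ := by
    rw [hTU, ← htv]
    exact norm_add_le _ _
  have hA2 : ‖W‖ - Real.sqrt t ≤ ‖TL U‖ := by
    have : ‖W‖ = ‖TL U - TL V‖ := by rw [hTU, add_sub_cancel_left]
    have h6 : ‖TL U - TL V‖ ≤ ‖TL U‖ + ‖TL V‖ := norm_sub_le _ _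
    rw [htv] at h6
    linarith [this ▸ h6]
  have hA3 : Real.sqrt t - ‖W‖ ≤ ‖TL U‖ := by
    have : ‖TL V‖ = ‖TL U - W‖ := by rw [hTU, add_sub_cancel_right]
    have h6 : ‖TL U - W‖ ≤ ‖TL U‖ + ‖W‖ := norm_sub_le _ _
    rw [← this, htv] at h6
    linarith
  constructor
  · rw [hgoal, hWs]
    exact sq_le_sq' (by linarith) (by linarith)
  · rw [hgoal, hWs]
    exact sq_le_sq' (by linarith [norm_nonneg (TL U), Real.sqrt_nonneg t, norm_nonneg W]) (by linarith)
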